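/- Theorem 1 (graph form): let G be a finite simple graph and let x and y be two vertices of G with degrees deg(x) = k₁ and deg(y) = k₂, where k₁ ≥ k₂. For a vertex v, let L_v = (l_1, …, l_Δ) be the vector whose i-th entry is the number of neighbors of v having degree i, where Δ is the maximum degree of G. Then the node distance d(x,y) := √2·D_H(L_x‖L_y) satisfies √k₁ − √k₂ ≤ d(x,y) ≤ √(k₁ + k₂). -/

import Mathlib

/-- Hellinger distance between two real vectors. -/
noncomputable def hellingerDist {m : ℕ} (P Q : Fin m → ℝ) : ℝ :=
  (1 / Real.sqrt 2) * Real.sqrt (∑ i, (Real.sqrt (P i) - Real.sqrt (Q i)) ^ 2)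

/-- The degree-distribution vector of a vertex `v`: its `i`-th entry (for `i = 1, …, Δ`,
with `Δ` the maximum degree of `G`) is the number of neighbors of `v` having degree `i`. -/
noncomputable def degVec {V : Type*} [Fintype V] [DecidableEq V]
    (G : SimpleGraph V) [DecidableRel G.Adj] (v : V) : Fin G.maxDegree → ℝ :=
  fun i => ((G.neighborFinset v).filter (fun w => G.degree w = i.1 + 1)).card

lemma sum_degVec {V : Type*} [Fintype V] [DecidableEq V]
    (G : SimpleGraph V) [DecidableRel G.Adj] (v : V) :
    ∑ i, degVec G v i = (G.degree v : ℝ) := by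
  unfold degVec
  norm_cast
  rw [← SimpleGraph.card_neighborFinset_eq_degree,
    Fin.sum_univ_eq_sum_range
      (fun i => ((G.neighborFinset v).filter (fun w => G.degree w = i + 1)).card)]
  have h1 : ∀ w ∈ G.neighborFinset v, 1 ≤ G.degree w := by
    intro w hw
    rw [SimpleGraph.mem_neighborFinset] at hw
    have : 0 < G.degree w := by
      rw [SimpleGraph.degree_pos_iff_exists_adj]
      exact ⟨v, hw.symm⟩
    omega
  have := Finset.card_eq_sum_card_fiberwise
    (f := fun w => G.degree w - 1) (t := Finset.range G.maxDegree)
    (s := G.neighborFinset v)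
    (by
      intro w hw
      rw [Finset.mem_coe, Finset.mem_range]
      have := G.degree_le_maxDegree w
      have := h1 w hw
      dsimp only
      omega)
  rw [this]
  refine Finset.sum_congr rfl fun i _ => ?_
  congr 1
  apply Finset.filter_congr
  intro w hw
  have := h1 w hw
  constructor <;> intro h <;> omega

/-- Theorem 1 (graph form): for vertices `x`, `y` of a finite simple graph with
`deg x = k₁ ≥ k₂ = deg y`, the node distance `d(x,y) = √2 · D_H(L_x‖L_y)` satisfies
`√k₁ − √k₂ ≤ d(x,y) ≤ √(k₁ + k₂)`. -/
theorem hellinger_graph_bounds {V : Type*} [Fintype V] [DecidableEq V]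
    (G : SimpleGraph V) [DecidableRel G.Adj] (x y : V) (k₁ k₂ : ℕ)
    (hx : G.degree x = k₁) (hy : G.degree y = k₂) (hk : k₂ ≤ k₁) :
    Real.sqrt k₁ - Real.sqrt k₂ ≤ Real.sqrt 2 * hellingerDist (degVec G x) (degVec G y) ∧
    Real.sqrt 2 * hellingerDist (degVec G x) (degVec G y) ≤ Real.sqrt (k₁ + k₂) := by
  set P := degVec G x with hP
  set Q := degVec G y with hQ
  have hPnn : ∀ i, 0 ≤ P i := fun i => Nat.cast_nonneg _
  have hQnn : ∀ i, 0 ≤ Q i := fun i => Nat.cast_nonneg _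
  have hsP : ∑ i, P i = (k₁ : ℝ) := by rw [hP, sum_degVec, hx]
  have hsQ : ∑ i, Q i = (k₂ : ℝ) := by rw [hQ, sum_degVec, hy]
  have h2 : Real.sqrt 2 ≠ 0 := by positivity
  have hmain : Real.sqrt 2 * hellingerDist P Q
      = Real.sqrt (∑ i, (Real.sqrt (P i) - Real.sqrt (Q i)) ^ 2) := by
    unfold hellingerDist
    field_simp
  rw [hmain]
  set S := ∑ i, (Real.sqrt (P i) - Real.sqrt (Q i)) ^ 2 with hS
  constructor
  · -- lower bound via euclidean norm
    set f : EuclideanSpace ℝ (Fin G.maxDegree) := WithLp.toLp 2 (fun i => Real.sqrt (P i))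
    set g : EuclideanSpace ℝ (Fin G.maxDegree) := WithLp.toLp 2 (fun i => Real.sqrt (Q i))
    have hnf : ‖f‖ = Real.sqrt (k₁ : ℝ) := by
      rw [EuclideanSpace.norm_eq]
      congr 1
      rw [← hsP]
      refine Finset.sum_congr rfl fun i _ => ?_
      rw [Real.norm_eq_abs, sq_abs, Real.sq_sqrt (hPnn i)]
    have hng : ‖g‖ = Real.sqrt (k₂ : ℝ) := by
      rw [EuclideanSpace.norm_eq]
      congr 1
      rw [← hsQ]
      refine Finset.sum_congr rfl fun i _ => ?_
      rw [Real.norm_eq_abs, sq_abs, Real.sq_sqrt (hQnn i)]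
    have hnfg : ‖f - g‖ = Real.sqrt S := by
      rw [EuclideanSpace.norm_eq, hS]
      congr 1
      refine Finset.sum_congr rfl fun i _ => ?_
      simp [f, g, Real.norm_eq_abs, sq_abs]
    calc Real.sqrt k₁ - Real.sqrt k₂ = ‖f‖ - ‖g‖ := by rw [hnf, hng]
      _ ≤ ‖f - g‖ := norm_sub_norm_le f g
      _ = Real.sqrt S := hnfg
  · -- upper bound
    have hle : S ≤ (k₁ : ℝ) + k₂ := by
      rw [← hsP, ← hsQ, ← Finset.sum_add_distrib, hS]
      refine Finset.sum_le_sum fun i _ => ?_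
      have h1 : Real.sqrt (P i) ^ 2 = P i := Real.sq_sqrt (hPnn i)
      have h2 : Real.sqrt (Q i) ^ 2 = Q i := Real.sq_sqrt (hQnn i)
      nlinarith [Real.sqrt_nonneg (P i), Real.sqrt_nonneg (Q i)]
    calc Real.sqrt S ≤ Real.sqrt ((k₁ : ℝ) + k₂) := Real.sqrt_le_sqrt hle
      _ = Real.sqrt ((k₁ : ℕ) + (k₂ : ℕ) : ℝ) := by norm_cast
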